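/- Let ũ^n = (4/3)u^n − (1/3)u^{n−1} and suppose y^n ∈ X satisfies (2/(3δt))(3y^n − 4u^n + u^{n−1}) + M(y^n − ũ^n) + h(y^n) + 2f(u^n) − f(u^{n−1}) = 0, with δt < 2/(3L). Then with d^n = y^n − u^n, ⟨∇E^n(y^n), d^n⟩ ≤ −(2/(3δt) − L)‖d^n‖² − (5/6)‖d^n‖_M² + (1/6)‖u^n − u^{n−1}‖_M². -/

import Mathlib

open scoped RealInnerProductSpace

section aux

variable {X : Type*} [NormedAddCommGroup X] [InnerProductSpace ℝ X] [CompleteSpace X]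

lemma hga_add {f g : X → ℝ} {f' g' x : X} (hf : HasGradientAt f f' x)
    (hg : HasGradientAt g g' x) : HasGradientAt (fun u => f u + g u) (f' + g') x := by
  rw [hasGradientAt_iff_hasFDerivAt] at *
  simpa [map_add] using hf.fun_add hg

lemma hga_sub {f g : X → ℝ} {f' g' x : X} (hf : HasGradientAt f f' x)
    (hg : HasGradientAt g g' x) : HasGradientAt (fun u => f u - g u) (f' - g') x := by
  rw [hasGradientAt_iff_hasFDerivAt] at *
  simpa [map_sub] using hf.fun_sub hg

lemma hga_smul {f : X → ℝ} {f' x : X} (c : ℝ) (hf : HasGradientAt f f' x) :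
    HasGradientAt (fun u => c * f u) (c • f') x := by
  rw [hasGradientAt_iff_hasFDerivAt] at *
  simpa [map_smul] using hf.fun_const_smul c

lemma hga_inner (w c x : X) : HasGradientAt (fun u => ⟪w, u - c⟫) w x := by
  rw [hasGradientAt_iff_isLittleO]
  have : ∀ x' : X, ⟪w, x' - c⟫ - ⟪w, x - c⟫ - ⟪w, x' - x⟫ = 0 := by
    intro x'
    rw [← inner_sub_right, ← inner_sub_right]
    have : x' - c - (x - c) - (x' - x) = 0 := by abel
    rw [this, inner_zero_right]
  simp only [this]
  exact Asymptotics.isLittleO_zero _ _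

lemma hga_sq (c x : X) : HasGradientAt (fun u => ‖u - c‖ ^ 2) ((2 : ℝ) • (x - c)) x := by
  rw [hasGradientAt_iff_isLittleO]
  have key : ∀ x' : X, ‖x' - c‖ ^ 2 - ‖x - c‖ ^ 2 - ⟪(2 : ℝ) • (x - c), x' - x⟫
      = ‖x' - x‖ ^ 2 := by
    intro x'
    have h1 : x' - c = (x - c) + (x' - x) := by abel
    rw [h1, ← real_inner_self_eq_norm_sq, ← real_inner_self_eq_norm_sq,
      ← real_inner_self_eq_norm_sq, inner_add_add_self, real_inner_smul_left]
    rw [real_inner_comm (x' - x) (x - c)]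
    ring
  simp only [key]
  rw [Asymptotics.isLittleO_iff]
  intro ε hε
  have hev : ∀ᶠ x' in nhds x, ‖x' - x‖ ≤ ε := by
    filter_upwards [Metric.ball_mem_nhds x hε] with x' hx'
    rw [Metric.mem_ball, dist_eq_norm] at hx'
    exact hx'.le
  filter_upwards [hev] with x' hx'
  calc ‖‖x' - x‖ ^ 2‖ = ‖x' - x‖ * ‖x' - x‖ := by
        rw [Real.norm_eq_abs, abs_of_nonneg (by positivity), sq]
    _ ≤ ε * ‖x' - x‖ := mul_le_mul_of_nonneg_right hx' (norm_nonneg _)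

end aux

/-- Descent estimate of `dⁿ = yⁿ - uⁿ` for `Eⁿ` at `yⁿ` in the extrapolated case `ûⁿ = ũⁿ`. -/
theorem descent_estimate_util
    {X : Type*} [NormedAddCommGroup X] [InnerProductSpace ℝ X] [FiniteDimensional ℝ X]
    (H : X → ℝ) (h : X → X) (hH : ∀ x : X, HasGradientAt H (h x) x)
    (hHconv : ConvexOn ℝ Set.univ H)
    (F : X → ℝ) (f : X → X) (hF : ∀ x : X, HasGradientAt F (f x) x)
    (L : ℝ) (hL : 0 < L) (hLip : ∀ x y : X, ‖f x - f y‖ ≤ L * ‖x - y‖)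
    (δt : ℝ) (hδt : 0 < δt) (hδt2 : δt < 2 / (3 * L))
    (M : X →L[ℝ] X) (hMsym : ∀ x y : X, ⟪M x, y⟫ = ⟪x, M y⟫)
    (hMpsd : ∀ x : X, 0 ≤ ⟪M x, x⟫)
    (un unm1 : X)
    (Hn Fn En : X → ℝ)
    (hHn : ∀ u : X, Hn u = H u + (1 / δt) * ‖u - un‖ ^ 2)
    (hFn : ∀ u : X, Fn u = (1 / (3 * δt)) * ‖u - unm1‖ ^ 2 - F u
      - ⟪f un - f unm1, u - unm1⟫)
    (hEn : ∀ u : X, En u = Hn u - Fn u)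
    (util : X) (hutil : util = (4 / 3 : ℝ) • un - (1 / 3 : ℝ) • unm1)
    (yn : X)
    (hopt : (2 / (3 * δt)) • ((3 : ℝ) • yn - (4 : ℝ) • un + unm1) + M (yn - util)
      + h yn + (2 : ℝ) • f un - f unm1 = 0) :
    ⟪gradient En yn, yn - un⟫ ≤ -(2 / (3 * δt) - L) * ‖yn - un‖ ^ 2
      - (5 / 6) * ⟪M (yn - un), yn - un⟫ + (1 / 6) * ⟪M (un - unm1), un - unm1⟫ := by
  have hEnfun : En = fun u => (H u + (1 / δt) * ‖u - un‖ ^ 2)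
      - ((1 / (3 * δt)) * ‖u - unm1‖ ^ 2 - F u - ⟪f un - f unm1, u - unm1⟫) := by
    funext u; rw [hEn, hHn, hFn]
  have hgrad : HasGradientAt En
      ((h yn + (1 / δt) • ((2 : ℝ) • (yn - un)))
        - ((1 / (3 * δt)) • ((2 : ℝ) • (yn - unm1)) - f yn - (f un - f unm1))) yn := by
    rw [hEnfun]
    exact hga_sub
      (hga_add (hH yn) (hga_smul _ (hga_sq un yn)))
      (hga_sub (hga_sub (hga_smul _ (hga_sq unm1 yn)) (hF yn))
        (hga_inner (f un - f unm1) unm1 yn))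
  have hhyn : h yn = -((2 / (3 * δt)) • ((3 : ℝ) • yn - (4 : ℝ) • un + unm1))
      - M (yn - util) - (2 : ℝ) • f un + f unm1 := by
    apply eq_of_sub_eq_zero
    rw [← hopt]; abel
  set d := yn - un with hd
  set w := un - unm1 with hw
  have hgrad_eq : gradient En yn
      = -((2 / (3 * δt)) • d) - M (yn - util) + (f yn - f un) := by
    rw [hgrad.gradient, hhyn]
    have hdt : δt ≠ 0 := ne_of_gt hδt
    rw [hd]
    match_scalars <;> field_simp <;> ring
  have hyu : yn - util = d - (1 / 3 : ℝ) • w := by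
    rw [hutil, hd, hw]
    module
  rw [hyu] at hgrad_eq
  have expand : ⟪gradient En yn, d⟫
      = -(2 / (3 * δt) * ‖d‖ ^ 2) - (⟪M d, d⟫ - (1/3) * ⟪M w, d⟫)
        + ⟪f yn - f un, d⟫ := by
    rw [hgrad_eq, inner_add_left, inner_sub_left, inner_neg_left, real_inner_smul_left,
      real_inner_self_eq_norm_sq, map_sub, map_smul, inner_sub_left, inner_smul_left]
    simp only [RCLike.star_def, conj_trivial]
  have hlip : ⟪f yn - f un, d⟫ ≤ L * ‖d‖ ^ 2 := by
    calc ⟪f yn - f un, d⟫ ≤ ‖f yn - f un‖ * ‖d‖ := real_inner_le_norm _ _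
      _ ≤ (L * ‖yn - un‖) * ‖d‖ :=
          mul_le_mul_of_nonneg_right (hLip yn un) (norm_nonneg _)
      _ = L * ‖d‖ ^ 2 := by rw [← hd]; ring
  have hcross : 2 * ⟪M w, d⟫ ≤ ⟪M d, d⟫ + ⟪M w, w⟫ := by
    have hpsd := hMpsd (d - w)
    simp only [map_sub, inner_sub_left, inner_sub_right] at hpsd
    have hsym : ⟪M d, w⟫ = ⟪M w, d⟫ := by rw [hMsym d w, real_inner_comm]
    linarith [hpsd, hsym.ge, hsym.le]
  rw [expand]
  linarith [hlip, hcross]
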